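/- Let S = {(x_i, y_i)}_{i=1}^n be a finite indexed family of labeled samples partitioned into a clean subset S_C and a dirty subset S_D, and suppose there is a unit vector w* ∈ ℝ^d and γ > 0 with y_i (w*·x_i) ≥ γ for every i ∈ S_C. Let q ∈ [0, 1]^n, let v̂ ∈ ℝ^d with ‖v̂‖₂ = 1/γ, set ŵ := v̂/‖v̂‖₂, and assume α := ŵ·w* ∈ (0, 1); let w' := (w* − α ŵ)/‖w* − α ŵ‖₂. Let 0 < τ ≤ γ/2 and let (x, y) be a labeled sample with y (ŵ·x) ≤ 0. Let a ∈ ℝ^n be any vector such that for every i: a_i ∈ [-1, 0], a_i = −1 whenever y_i (v̂·x_i) < 1, and a_i = 0 whenever y_i (v̂·x_i) > 1 (i.e. the vector g = Σ_i a_i q_i y_i x_i is an element of the subdifferential of the reweighted hinge loss at v̂). Then Σ_{i=1}^n a_i q_i y_i (x_i·w') ≤ −(γ/2) Σ_{i ∈ S_C, (x_i, y_i) ∈ P_ŵ^τ(x, y)} q_i + ‖q∘S_D‖_Σ. -/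

import Mathlib

open scoped RealInnerProductSpace

set_option maxHeartbeats 1000000 in
/-- Lemma: gradient bound in the direction `w'` orthogonal to `ŵ`: with
`‖v̂‖ = 1/γ`, `ŵ = v̂/‖v̂‖`, `α = ŵ · w* ∈ (0,1)` and
`w' = (w* − α ŵ)/‖w* − α ŵ‖`, for any misclassified sample `(x₀, y₀)` and any subgradient
coefficient vector `a` of the reweighted hinge loss at `v̂`, the gradient in the direction `w'`
is bounded by `-(γ/2) ∑_{i ∈ S_C ∩ P} q i + ‖q ∘ S_D‖_Σ`. -/
theorem stmt_6 {d n : ℕ} (x : Fin n → EuclideanSpace ℝ (Fin d)) (y : Fin n → ℝ)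
    (hy : ∀ i, y i = 1 ∨ y i = -1)
    (SC SD : Finset (Fin n)) (hdisj : Disjoint SC SD) (hpart : SC ∪ SD = Finset.univ)
    (wstar : EuclideanSpace ℝ (Fin d)) (hwstar : ‖wstar‖ = 1)
    (γ : ℝ) (hγ : 0 < γ) (hmargin : ∀ i ∈ SC, γ ≤ y i * ⟪wstar, x i⟫)
    (q : Fin n → ℝ) (hq : ∀ i, q i ∈ Set.Icc (0 : ℝ) 1)
    (v : EuclideanSpace ℝ (Fin d)) (hvnorm : ‖v‖ = 1 / γ)
    (w' : EuclideanSpace ℝ (Fin d))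
    (hα : ⟪‖v‖⁻¹ • v, wstar⟫ ∈ Set.Ioo (0 : ℝ) 1)
    (hw' : w' = ‖wstar - ⟪‖v‖⁻¹ • v, wstar⟫ • (‖v‖⁻¹ • v)‖⁻¹ •
                (wstar - ⟪‖v‖⁻¹ • v, wstar⟫ • (‖v‖⁻¹ • v)))
    (τ : ℝ) (hτ0 : 0 < τ) (hτ : τ ≤ γ / 2)
    (x0 : EuclideanSpace ℝ (Fin d)) (y0 : ℝ) (hy0 : y0 = 1 ∨ y0 = -1)
    (hmis : y0 * ⟪‖v‖⁻¹ • v, x0⟫ ≤ 0)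
    (a : Fin n → ℝ) (ha : ∀ i, a i ∈ Set.Icc (-1 : ℝ) 0)
    (haneg : ∀ i, y i * ⟪v, x i⟫ < 1 → a i = -1)
    (hazero : ∀ i, 1 < y i * ⟪v, x i⟫ → a i = 0) :
    (∑ i, a i * q i * (y i * ⟪x i, w'⟫))
      ≤ -(γ / 2) * (∑ i ∈ SC.filter (fun i =>
              |y i * ⟪‖v‖⁻¹ • v, x i⟫ - y0 * ⟪‖v‖⁻¹ • v, x0⟫| ≤ τ), q i)
        + ⨆ (b : Fin n → Set.Icc (-1 : ℝ) 1), ‖∑ i ∈ SD, ((b i : ℝ) * q i) • x i‖ := by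
  set wh : EuclideanSpace ℝ (Fin d) := ‖v‖⁻¹ • v with hwhdef
  set α : ℝ := ⟪wh, wstar⟫ with hαdef
  obtain ⟨hα0, hα1⟩ := hα
  have hγne : γ ≠ 0 := ne_of_gt hγ
  have hvinv : ‖v‖⁻¹ = γ := by rw [hvnorm]; simp
  have hwhnorm : ‖wh‖ = 1 := by
    rw [hwhdef, norm_smul, hvinv, hvnorm, Real.norm_eq_abs, abs_of_pos hγ]
    field_simp
  have hinnerwh : ∀ z : EuclideanSpace ℝ (Fin d), ⟪wh, z⟫ = γ * ⟪v, z⟫ := by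
    intro z; rw [hwhdef, hvinv, real_inner_smul_left]
  set β : ℝ := ‖wstar - α • wh‖ with hβdef
  have hβsq : β ^ 2 = 1 - α ^ 2 := by
    have hc : (⟪wstar, wh⟫ : ℝ) = α := by rw [real_inner_comm]
    rw [hβdef, norm_sub_sq_real, hwstar, real_inner_smul_right, hc,
      norm_smul, hwhnorm, Real.norm_eq_abs, mul_one, sq_abs]
    ring
  have hβnn : 0 ≤ β := norm_nonneg _
  have hβpos : 0 < β := by nlinarith
  have hβle1 : β ≤ 1 := by nlinarith
  have hw'norm : ‖w'‖ = 1 := by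
    rw [hw', norm_smul, Real.norm_eq_abs, abs_of_pos (inv_pos.mpr hβpos)]
    field_simp
    exact hβdef.symm
  have hinner_w' : ∀ z : EuclideanSpace ℝ (Fin d),
      ⟪z, w'⟫ = β⁻¹ * (⟪z, wstar⟫ - α * ⟪z, wh⟫) := by
    intro z
    rw [hw', real_inner_smul_right, inner_sub_right, real_inner_smul_right]
  have hdir : ∀ i ∈ SC, γ - α * (γ * (y i * ⟪v, x i⟫)) ≤ β * (y i * ⟪x i, w'⟫) := by
    intro i hi
    have hm := hmargin i hi
    have hwx : (⟪x i, wh⟫ : ℝ) = γ * ⟪v, x i⟫ := by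
      rw [real_inner_comm]; exact hinnerwh (x i)
    have hws : (⟪x i, wstar⟫ : ℝ) = ⟪wstar, x i⟫ := real_inner_comm _ _
    have heq : β * (y i * ⟪x i, w'⟫)
        = y i * ⟪wstar, x i⟫ - α * (γ * (y i * ⟪v, x i⟫)) := by
      rw [hinner_w', hwx, hws]
      field_simp
    rw [heq]
    linarith
  have hfSC : ∀ i ∈ SC, a i * q i * (y i * ⟪x i, w'⟫) ≤ 0 := by
    intro i hi
    rcases eq_or_ne (a i) 0 with h0 | h0
    · simp [h0]
    · have hle : y i * ⟪v, x i⟫ ≤ 1 := by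
        by_contra h
        exact h0 (hazero i (lt_of_not_ge h))
      have key := hdir i hi
      have h1 : 0 ≤ γ - α * (γ * (y i * ⟪v, x i⟫)) := by
        nlinarith [mul_nonneg (mul_pos hα0 hγ).le (sub_nonneg.mpr hle),
          mul_nonneg (by linarith : (0:ℝ) ≤ 1 - α) hγ.le]
      have h2 : 0 ≤ y i * ⟪x i, w'⟫ := by
        by_contra h
        push_neg at h
        nlinarith [mul_pos hβpos (neg_pos.mpr h)]
      have ⟨ha1, ha2⟩ := ha i
      have ⟨hq1, hq2⟩ := hq i
      have haq : a i * q i ≤ 0 := mul_nonpos_iff.mpr (Or.inr ⟨ha2, hq1⟩)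
      exact mul_nonpos_of_nonpos_of_nonneg haq h2
  have hfSCP : ∀ i ∈ SC, |y i * ⟪wh, x i⟫ - y0 * ⟪wh, x0⟫| ≤ τ →
      a i * q i * (y i * ⟪x i, w'⟫) ≤ -(γ / 2) * q i := by
    intro i hi hP
    have habs := abs_le.mp hP
    have ht : y i * ⟪wh, x i⟫ ≤ τ := by linarith [habs.2]
    have htv : γ * (y i * ⟪v, x i⟫) ≤ τ := by
      rw [hinnerwh (x i)] at ht; linarith
    have hγlt : γ * (y i * ⟪v, x i⟫) < γ * 1 := by rw [mul_one]; linarith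
    have hlt1 : y i * ⟪v, x i⟫ < 1 := lt_of_mul_lt_mul_left hγlt hγ.le
    have hai : a i = -1 := haneg i hlt1
    have key := hdir i hi
    have hat : α * (γ * (y i * ⟪v, x i⟫)) ≤ τ := by
      rcases le_or_gt (γ * (y i * ⟪v, x i⟫)) 0 with h | h
      · have := mul_nonpos_of_nonneg_of_nonpos hα0.le h
        linarith
      · have := mul_le_of_le_one_left h.le hα1.le
        linarith
    have h2 : γ / 2 ≤ β * (y i * ⟪x i, w'⟫) := by linarith
    have ht'pos : 0 < y i * ⟪x i, w'⟫ := by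
      by_contra h
      push_neg at h
      nlinarith [mul_nonneg hβpos.le (neg_nonneg.mpr h)]
    have h3 : γ / 2 ≤ y i * ⟪x i, w'⟫ := by
      have := mul_le_of_le_one_left ht'pos.le hβle1
      linarith
    have ⟨hq1, hq2⟩ := hq i
    have hfin := mul_le_mul_of_nonneg_left h3 hq1
    rw [hai]
    nlinarith [hfin]
  have hsplit : (∑ i, a i * q i * (y i * ⟪x i, w'⟫))
      = (∑ i ∈ SC, a i * q i * (y i * ⟪x i, w'⟫))
        + ∑ i ∈ SD, a i * q i * (y i * ⟪x i, w'⟫) := by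
    rw [← Finset.sum_union hdisj, hpart]
  rw [hsplit]
  have hSCsplit := Finset.sum_filter_add_sum_filter_not SC
    (fun i => |y i * ⟪wh, x i⟫ - y0 * ⟪wh, x0⟫| ≤ τ)
    (fun i => a i * q i * (y i * ⟪x i, w'⟫))
  have hSC1 : (∑ i ∈ SC.filter (fun i => |y i * ⟪wh, x i⟫ - y0 * ⟪wh, x0⟫| ≤ τ),
      a i * q i * (y i * ⟪x i, w'⟫))
      ≤ -(γ / 2) * (∑ i ∈ SC.filter (fun i => |y i * ⟪wh, x i⟫ - y0 * ⟪wh, x0⟫| ≤ τ), q i) := by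
    rw [Finset.mul_sum]
    refine Finset.sum_le_sum ?_
    intro i hi
    rw [Finset.mem_filter] at hi
    exact hfSCP i hi.1 hi.2
  have hSC2 : (∑ i ∈ SC.filter (fun i => ¬ |y i * ⟪wh, x i⟫ - y0 * ⟪wh, x0⟫| ≤ τ),
      a i * q i * (y i * ⟪x i, w'⟫)) ≤ 0 := by
    refine Finset.sum_nonpos ?_
    intro i hi
    rw [Finset.mem_filter] at hi
    exact hfSC i hi.1
  have hb : ∀ i, a i * y i ∈ Set.Icc (-1 : ℝ) 1 := by
    intro i
    have ⟨ha1, ha2⟩ := ha i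
    rcases hy i with h | h <;> rw [h] <;> constructor <;> nlinarith
  set b : Fin n → Set.Icc (-1 : ℝ) 1 := fun i => ⟨a i * y i, hb i⟩ with hbdef
  have hSD : (∑ i ∈ SD, a i * q i * (y i * ⟪x i, w'⟫))
      ≤ ⨆ (b : Fin n → Set.Icc (-1 : ℝ) 1), ‖∑ i ∈ SD, ((b i : ℝ) * q i) • x i‖ := by
    have h1 : (∑ i ∈ SD, a i * q i * (y i * ⟪x i, w'⟫))
        = ⟪∑ i ∈ SD, ((b i : ℝ) * q i) • x i, w'⟫ := by
      rw [sum_inner]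
      refine Finset.sum_congr rfl ?_
      intro i _
      rw [real_inner_smul_left, hbdef]
      ring
    rw [h1]
    refine le_trans (real_inner_le_norm _ _) ?_
    rw [hw'norm, mul_one]
    have hbdd : BddAbove (Set.range fun (c : Fin n → Set.Icc (-1:ℝ) 1) =>
        ‖∑ i ∈ SD, ((c i : ℝ) * q i) • x i‖) := by
      refine ⟨∑ i ∈ SD, ‖x i‖, ?_⟩
      rintro _ ⟨c, rfl⟩
      refine le_trans (norm_sum_le _ _) (Finset.sum_le_sum ?_)
      intro i _
      rw [norm_smul]
      have hc : |(c i : ℝ)| ≤ 1 := abs_le.mpr (c i).2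
      have ⟨hq1, hq2⟩ := hq i
      have hcq : ‖(c i : ℝ) * q i‖ ≤ 1 := by
        rw [Real.norm_eq_abs, abs_mul, abs_of_nonneg hq1]
        calc |(c i : ℝ)| * q i ≤ 1 * q i := mul_le_mul_of_nonneg_right hc hq1
          _ ≤ 1 := by linarith
      calc ‖(c i : ℝ) * q i‖ * ‖x i‖ ≤ 1 * ‖x i‖ :=
            mul_le_mul_of_nonneg_right hcq (norm_nonneg _)
        _ = ‖x i‖ := one_mul _
    exact le_ciSup hbdd b
  calc (∑ i ∈ SC, a i * q i * (y i * ⟪x i, w'⟫)) + ∑ i ∈ SD, a i * q i * (y i * ⟪x i, w'⟫)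
      ≤ (-(γ / 2) * (∑ i ∈ SC.filter (fun i => |y i * ⟪wh, x i⟫ - y0 * ⟪wh, x0⟫| ≤ τ), q i) + 0)
        + ⨆ (b : Fin n → Set.Icc (-1 : ℝ) 1), ‖∑ i ∈ SD, ((b i : ℝ) * q i) • x i‖ := by
        refine add_le_add ?_ hSD
        rw [← hSCsplit]
        exact add_le_add hSC1 hSC2
    _ = _ := by rw [add_zero]
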